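/- For Hermitian n×n matrices A and Ã, (A, I) ∼ (Ã, I) (∼-congruence with the identity as the symmetric matrix) holds if and only if there exist a complex orthogonal matrix Q (i.e. QᵀQ = I) and ε ∈ {1,−1} with Ã = ε Q*AQ. -/

import Mathlib

open Matrix

theorem stmt_6 (n : ℕ) (A A' : Matrix (Fin n) (Fin n) ℂ)
    (hA : A.IsHermitian) (hA2 : A'.IsHermitian) :
    (∃ P : Matrix (Fin n) (Fin n) ℂ, IsUnit P ∧ ∃ c : ℂ, ‖c‖ = 1 ∧
        A' = c • (Pᴴ * A * P) ∧ (1 : Matrix (Fin n) (Fin n) ℂ) = (starRingEnd ℂ c) • (Pᵀ * 1 * P))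
      ↔
    (∃ Q : Matrix (Fin n) (Fin n) ℂ, ∃ ε : ℂ, (ε = 1 ∨ ε = -1) ∧
        Qᵀ * Q = 1 ∧ A' = ε • (Qᴴ * A * Q)) := by
  constructor
  · rintro ⟨P, hP, c, hc, hA', hI⟩
    have hns : Complex.normSq c = 1 := by
      have : ‖c‖ = 1 := by exact hc
      rw [Complex.normSq_eq_norm_sq, this, one_pow]
    have hcc : (starRingEnd ℂ) c * c = 1 := by
      rw [mul_comm, Complex.mul_conj, hns]; norm_num
    obtain ⟨d, hd⟩ : ∃ d : ℂ, d ^ 2 = (starRingEnd ℂ) c :=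
      IsAlgClosed.exists_pow_nat_eq _ (by norm_num)
    have hQtQ : (d • P)ᵀ * (d • P) = 1 := by
      rw [transpose_smul, smul_mul_assoc, mul_smul_comm, smul_smul, ← sq, hd]
      rw [mul_one] at hI
      rw [← hI]
    have key : (d • P)ᴴ * A * (d • P) = (star d * d) • (Pᴴ * A * P) := by
      rw [conjTranspose_smul, smul_mul_assoc, smul_mul_assoc, mul_smul_comm, smul_smul]
    by_cases h : (starRingEnd ℂ) c = c
    · -- c is real, hence c = ±1
      have hc2 : c * c = 1 := by rwa [h] at hcc
      have hdd : star d * d = 1 := by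
        have h1 : Complex.normSq d ^ 2 = 1 := by
          rw [← map_pow, hd, Complex.normSq_conj, hns]
        have h2 : (Complex.normSq d : ℝ) = 1 := by
          nlinarith [Complex.normSq_nonneg d]
        show (starRingEnd ℂ) d * d = 1
        rw [mul_comm, Complex.mul_conj, h2]; norm_num
      refine ⟨d • P, c, mul_self_eq_one_iff.mp hc2, hQtQ, ?_⟩
      rw [key, hdd, one_smul]
      exact hA'
    · -- c not real: then PᴴAP = 0
      have hH : A'ᴴ = (starRingEnd ℂ) c • (Pᴴ * A * P) := by
        rw [hA', conjTranspose_smul, conjTranspose_mul, conjTranspose_mul,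
          conjTranspose_conjTranspose, hA.eq, mul_assoc]
        rfl
      have hzero : (Pᴴ * A * P) = 0 := by
        have hsub : (c - (starRingEnd ℂ) c) • (Pᴴ * A * P) = 0 := by
          rw [sub_smul, ← hA', ← hH, hA2.eq, sub_self]
        have hne : c - (starRingEnd ℂ) c ≠ 0 := by
          intro h0
          exact h (by linear_combination -h0)
        exact (smul_eq_zero.mp hsub).resolve_left hne
      refine ⟨d • P, 1, Or.inl rfl, hQtQ, ?_⟩
      rw [key, hzero, smul_zero, smul_zero, hA', hzero, smul_zero]
  · rintro ⟨Q, ε, hε, hQ, hA'⟩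
    have hQQt : Q * Qᵀ = 1 := mul_eq_one_comm.mp hQ
    rcases hε with hε | hε
    · refine ⟨Q, IsUnit.of_mul_eq_one _ hQQt, 1, by norm_num, ?_, ?_⟩
      · rw [hA', hε]
      · rw [mul_one, hQ]; simp
    · refine ⟨Complex.I • Q, ?_, -1, by norm_num, ?_, ?_⟩
      · refine IsUnit.of_mul_eq_one ((-Complex.I) • Qᵀ) ?_
        rw [smul_mul_assoc, mul_smul_comm, smul_smul, hQQt]
        norm_num [Complex.I_mul_I]
      · rw [hA', hε, conjTranspose_smul, smul_mul_assoc, smul_mul_assoc,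
          mul_smul_comm, smul_smul, smul_smul]
        congr 1
        rw [Complex.star_def, Complex.conj_I]
        ring_nf
        simp [Complex.I_sq]
      · rw [mul_one, transpose_smul, smul_mul_assoc, mul_smul_comm, smul_smul,
          smul_smul, hQ]
        norm_num [Complex.I_mul_I]
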